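/- For every odd t ≥ 3 with t > r ≥ 1, and n ≥ 2t-1, the minimum number of copies of the star S_r over all S_t-saturated graphs on n vertices equals the minimum over 0 ≤ m ≤ t-1 of m·binom(m-1, r) + (n-m)·binom(t-1, r). -/

import Mathlib

open SimpleGraph

/-- Degree of a vertex, via `Set.ncard` (avoids decidability assumptions). -/
noncomputable def ndeg {V : Type*} (G : SimpleGraph V) (v : V) : ℕ :=
  (G.neighborSet v).ncard

/-- A graph contains a copy of the star `S_t` (with `t` edges) iff some vertex
has degree at least `t`. -/
def ContainsStar {V : Type*} (G : SimpleGraph V) (t : ℕ) : Prop :=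
  ∃ v, t ≤ ndeg G v

/-- `G` is `S_t`-saturated: it contains no copy of `S_t`, but adding any missing
edge creates one. -/
def StarSaturated {V : Type*} (G : SimpleGraph V) (t : ℕ) : Prop :=
  ¬ ContainsStar G t ∧
    ∀ u v : V, u ≠ v → ¬ G.Adj u v → ContainsStar (G ⊔ SimpleGraph.edge u v) t

/-- The number of copies of the star `S_r` in `G`: each copy corresponds to a
center `v` together with a choice of `r` of its neighbors. -/
noncomputable def starCount {V : Type*} [Fintype V] (G : SimpleGraph V) (r : ℕ) : ℕ :=
  ∑ v : V, Nat.choose (ndeg G v) r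

namespace StarSatAux

lemma neighborSet_sup' {V : Type*} (G H : SimpleGraph V) (v : V) :
    (G ⊔ H).neighborSet v = G.neighborSet v ∪ H.neighborSet v := by
  ext w; simp [mem_neighborSet, sup_adj, Set.mem_union]

lemma edge_neighborSet_left {V : Type*} {u v : V} (huv : u ≠ v) :
    (SimpleGraph.edge u v).neighborSet u = {v} := by
  ext x
  simp only [mem_neighborSet, edge_adj, Set.mem_singleton_iff]
  constructor
  · rintro ⟨h | h, hne⟩
    · exact h.2
    · exact absurd h.1 huv
  · rintro rfl; simp [huv]

lemma edge_neighborSet_other {V : Type*} {u v w : V} (hu : w ≠ u) (hv : w ≠ v) :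
    (SimpleGraph.edge u v).neighborSet w = ∅ := by
  ext x
  simp only [mem_neighborSet, edge_adj, Set.mem_empty_iff_false, iff_false]
  rintro ⟨h | h, hne⟩
  · exact hu h.1
  · exact hv h.1

lemma edge_ncard_le {V : Type*} (u v w : V) :
    ((SimpleGraph.edge u v).neighborSet w).ncard ≤ 1 := by
  by_cases hc : u = v
  · subst hc
    rw [SimpleGraph.edge_self_eq_bot]
    simp [SimpleGraph.neighborSet]
  by_cases h1 : w = u
  · subst h1; rw [edge_neighborSet_left hc]; simp
  by_cases h2 : w = v
  · subst h2
    have : SimpleGraph.edge u w = SimpleGraph.edge w u := by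
      ext a b; rw [SimpleGraph.edge_adj, SimpleGraph.edge_adj]; tauto
    rw [this, edge_neighborSet_left (Ne.symm hc)]; simp
  · rw [edge_neighborSet_other h1 h2]; simp

lemma ndeg_sup_edge_le {V : Type*} [Finite V] (G : SimpleGraph V) (u v w : V) :
    ndeg (G ⊔ SimpleGraph.edge u v) w ≤ ndeg G w + 1 := by
  rw [ndeg, neighborSet_sup']
  refine le_trans (Set.ncard_union_le _ _) ?_
  exact Nat.add_le_add le_rfl (edge_ncard_le u v w)

lemma ndeg_sup_edge_other {V : Type*} [Finite V] (G : SimpleGraph V) {u v w : V}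
    (hu : w ≠ u) (hv : w ≠ v) :
    ndeg (G ⊔ SimpleGraph.edge u v) w = ndeg G w := by
  rw [ndeg, neighborSet_sup', edge_neighborSet_other hu hv, Set.union_empty, ndeg]

lemma ndeg_sup_edge_left {V : Type*} [Finite V] (G : SimpleGraph V) {u v : V}
    (huv : u ≠ v) (hadj : ¬ G.Adj u v) :
    ndeg (G ⊔ SimpleGraph.edge u v) u = ndeg G u + 1 := by
  rw [ndeg, neighborSet_sup', edge_neighborSet_left huv, Set.union_singleton,
    Set.ncard_insert_of_notMem (by simpa [mem_neighborSet] using hadj) (Set.toFinite _), ndeg]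

def Sset (N k : ℕ) : Set (ZMod N) :=
  ((fun i : ℕ => (i : ZMod N)) '' Set.Icc 1 k) ∪ ((fun i : ℕ => -(i : ZMod N)) '' Set.Icc 1 k)

lemma Sset_neg {N k : ℕ} {x : ZMod N} (h : x ∈ Sset N k) : -x ∈ Sset N k := by
  rcases h with ⟨i, hi, rfl⟩ | ⟨i, hi, rfl⟩
  · exact Or.inr ⟨i, hi, rfl⟩
  · exact Or.inl ⟨i, hi, by simp⟩

lemma zero_not_mem_Sset {N k : ℕ} (hN : 2 * k < N) : (0 : ZMod N) ∉ Sset N k := by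
  haveI : NeZero N := ⟨by omega⟩
  rintro (⟨i, hi, h⟩ | ⟨i, hi, h⟩) <;> simp only [Set.mem_Icc] at hi
  · simp only at h
    have hd := (ZMod.natCast_eq_zero_iff i N).mp h
    rcases Nat.eq_zero_or_pos i with h0 | h0
    · omega
    · have := Nat.le_of_dvd h0 hd; omega
  · simp only [neg_eq_zero] at h
    have hd := (ZMod.natCast_eq_zero_iff i N).mp h
    rcases Nat.eq_zero_or_pos i with h0 | h0
    · omega
    · have := Nat.le_of_dvd h0 hd; omega

lemma Sset_ncard {N k : ℕ} (hN : 2 * k < N) : (Sset N k).ncard = 2 * k := by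
  haveI : NeZero N := ⟨by omega⟩
  have hinj : Set.InjOn (fun i : ℕ => (i : ZMod N)) (Set.Icc 1 k) := by
    intro a ha b hb hab
    simp only [Set.mem_Icc] at ha hb
    have hv : (a : ZMod N).val = (b : ZMod N).val := congrArg ZMod.val hab
    rwa [ZMod.val_cast_of_lt (by omega), ZMod.val_cast_of_lt (by omega)] at hv
  have hinj' : Set.InjOn (fun i : ℕ => -(i : ZMod N)) (Set.Icc 1 k) := by
    intro a ha b hb hab
    simp only [neg_inj] at hab
    exact hinj ha hb hab
  have hdisj : Disjoint ((fun i : ℕ => (i : ZMod N)) '' Set.Icc 1 k)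
      ((fun i : ℕ => -(i : ZMod N)) '' Set.Icc 1 k) := by
    rw [Set.disjoint_left]
    rintro x ⟨i, hi, rfl⟩ ⟨j, hj, hx⟩
    simp only [Set.mem_Icc] at hi hj
    simp only at hx
    have hz : ((i + j : ℕ) : ZMod N) = 0 := by
      push_cast
      rw [← hx]; ring
    have hd := (ZMod.natCast_eq_zero_iff (i + j) N).mp hz
    have := Nat.le_of_dvd (by omega) hd
    omega
  have hIcc : (Set.Icc 1 k).ncard = k := by
    rw [← Finset.coe_Icc, Set.ncard_coe_finset, Nat.card_Icc]; omega
  rw [Sset, Set.ncard_union_eq hdisj ((Set.toFinite _)) ((Set.toFinite _)),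
    Set.ncard_image_of_injOn hinj, Set.ncard_image_of_injOn hinj', hIcc]
  omega

/-- Disjoint union of a clique on the first `m` vertices and a `2k`-regular
circulant graph on the remaining `n - m` vertices. -/
def constructG (n m k : ℕ) : SimpleGraph (Fin n) where
  Adj i j := (i.val < m ∧ j.val < m ∧ i ≠ j) ∨
    (m ≤ i.val ∧ m ≤ j.val ∧ i ≠ j ∧
      ((i.val - m : ℕ) : ZMod (n - m)) - ((j.val - m : ℕ) : ZMod (n - m)) ∈ Sset (n - m) k)
  symm := by
    constructor
    rintro i j (⟨h1, h2, h3⟩ | ⟨h1, h2, h3, h4⟩)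
    · exact Or.inl ⟨h2, h1, h3.symm⟩
    · refine Or.inr ⟨h2, h1, h3.symm, ?_⟩
      have := Sset_neg h4
      simpa using this
  loopless := by
    constructor
    rintro i (⟨_, _, h⟩ | ⟨_, _, h, _⟩) <;> exact h rfl

lemma ndeg_constructG_clique {n m k : ℕ} (hmn : m ≤ n) {v : Fin n} (hv : v.val < m) :
    ndeg (constructG n m k) v = m - 1 := by
  have hset : (constructG n m k).neighborSet v = {j : Fin n | j.val < m} \ {v} := by
    ext j
    simp only [mem_neighborSet, Set.mem_diff, Set.mem_setOf_eq, Set.mem_singleton_iff]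
    show (constructG n m k).Adj v j ↔ _
    unfold constructG
    simp only
    constructor
    · rintro (⟨h1, h2, h3⟩ | ⟨h1, _, _⟩)
      · exact ⟨h2, fun h => h3 (h ▸ rfl)⟩
      · omega
    · rintro ⟨h1, h2⟩
      exact Or.inl ⟨hv, h1, fun h => h2 h.symm⟩
  have hrange : {j : Fin n | j.val < m} = (Fin.castLE hmn) '' Set.univ := by
    ext j
    simp only [Set.mem_setOf_eq, Set.image_univ, Set.mem_range]
    constructor
    · intro h; exact ⟨⟨j.val, h⟩, Fin.ext rfl⟩
    · rintro ⟨w, rfl⟩; exact w.isLt.trans_le le_rfl |>.trans_le le_rfl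
  have hmem : v ∈ {j : Fin n | j.val < m} := hv
  rw [ndeg, hset, Set.ncard_sdiff_singleton_of_mem hmem, hrange,
    Set.ncard_image_of_injective _ (Fin.castLE_injective hmn), Set.ncard_univ,
    Nat.card_eq_fintype_card, Fintype.card_fin]

lemma ndeg_constructG_circ {n m k : ℕ} (hk : 2 * k < n - m) {v : Fin n} (hv : m ≤ v.val) :
    ndeg (constructG n m k) v = 2 * k := by
  set N := n - m with hN
  haveI : NeZero N := ⟨by omega⟩
  have hmn : m ≤ n := by omega
  set f : Fin n → ZMod N := fun j => ((j.val - m : ℕ) : ZMod N) with hf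
  have hgx : ∀ x : ZMod N, m + x.val < n := fun x => by
    have := ZMod.val_lt x; omega
  set g : ZMod N → Fin n := fun x => ⟨m + x.val, hgx x⟩ with hgdef
  have hfg : ∀ x, f (g x) = x := by
    intro x
    simp only [f, g, Nat.add_sub_cancel_left]
    exact ZMod.natCast_zmod_val x
  have hgf : ∀ j : Fin n, m ≤ j.val → g (f j) = j := by
    intro j hj
    have hlt : j.val - m < N := by omega
    apply Fin.ext
    simp only [g, f, ZMod.val_cast_of_lt hlt]
    omega
  have ginj : Function.Injective g := by
    intro x y hxy
    have : x.val = y.val := by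
      have := congrArg Fin.val hxy
      simpa [g] using this
    calc x = (x.val : ZMod N) := (ZMod.natCast_zmod_val x).symm
    _ = (y.val : ZMod N) := by rw [this]
    _ = y := ZMod.natCast_zmod_val y
  have hset : (constructG n m k).neighborSet v
      = g '' ((fun s => f v - s) '' Sset N k) := by
    ext j
    simp only [mem_neighborSet, Set.mem_image]
    constructor
    · intro hadj
      rcases hadj with (⟨h1, _, _⟩ | ⟨_, h2, h3, h4⟩)
      · omega
      · exact ⟨f j, ⟨f v - f j, h4, by ring⟩, hgf j h2⟩
    · rintro ⟨x, ⟨s, hs, rfl⟩, rfl⟩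
      have hne : v ≠ g (f v - s) := by
        intro hvg
        have : f v = f v - s := by
          conv_lhs => rw [hvg, hfg]
        have hs0 : s = 0 := by
          have := sub_eq_self.mp this.symm  -- ?
          exact this
        rw [hs0] at hs
        exact zero_not_mem_Sset hk hs
      refine Or.inr ⟨hv, ?_, hne, ?_⟩
      · exact Nat.le_add_right m _
      · show f v - f (g (f v - s)) ∈ Sset N k
        rw [hfg]
        have : f v - (f v - s) = s := by ring
        rw [this]
        exact hs
  rw [ndeg, hset, Set.ncard_image_of_injective _ ginj,
    Set.ncard_image_of_injective _ (fun a b h => by have : f v - a = f v - b := h; simpa using sub_right_injective this),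
    Sset_ncard hk]

lemma edge_comm' {V : Type*} (u v : V) : SimpleGraph.edge u v = SimpleGraph.edge v u := by
  ext a b; rw [SimpleGraph.edge_adj, SimpleGraph.edge_adj]; tauto

lemma constructG_saturated {n m k t : ℕ} (ht : t = 2 * k + 1) (hm : m ≤ 2 * k)
    (hk2 : 2 * k < n - m) : StarSaturated (constructG n m k) t := by
  have hmn : m ≤ n := by omega
  have hdeg : ∀ v : Fin n, ndeg (constructG n m k) v < t := by
    intro v
    rcases lt_or_ge v.val m with h | h
    · rw [ndeg_constructG_clique hmn h]; omega
    · rw [ndeg_constructG_circ hk2 h]; omega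
  constructor
  · rintro ⟨v, hv⟩; exact absurd hv (not_le.mpr (hdeg v))
  · intro u v huv hadj
    have hkey : m ≤ u.val ∨ m ≤ v.val := by
      by_contra hc
      push_neg at hc
      exact hadj (Or.inl ⟨hc.1, hc.2, huv⟩)
    rcases hkey with h | h
    · refine ⟨u, ?_⟩
      rw [ndeg_sup_edge_left _ huv hadj, ndeg_constructG_circ hk2 h]; omega
    · refine ⟨v, ?_⟩
      have hadj' : ¬ (constructG n m k).Adj v u := fun h' => hadj h'.symm
      rw [edge_comm', ndeg_sup_edge_left _ huv.symm hadj', ndeg_constructG_circ hk2 h]; omega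

lemma card_filter_lt_fin (n m : ℕ) (hmn : m ≤ n) :
    (Finset.univ.filter (fun v : Fin n => v.val < m)).card = m := by
  have he : Finset.univ.filter (fun v : Fin n => v.val < m)
      = Finset.image (Fin.castLE hmn) Finset.univ := by
    ext j
    simp only [Finset.mem_filter, Finset.mem_univ, true_and, Finset.mem_image]
    constructor
    · intro h; exact ⟨⟨j.val, h⟩, Fin.ext rfl⟩
    · rintro ⟨w, rfl⟩; exact w.isLt
  rw [he, Finset.card_image_of_injective _ (Fin.castLE_injective hmn), Finset.card_univ,
    Fintype.card_fin]

lemma starCount_constructG {n m k : ℕ} (r : ℕ) (hk2 : 2 * k < n - m) :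
    starCount (constructG n m k) r
      = m * Nat.choose (m - 1) r + (n - m) * Nat.choose (2 * k) r := by
  classical
  have hmn : m ≤ n := by omega
  rw [starCount, ← Finset.sum_filter_add_sum_filter_not Finset.univ (fun v : Fin n => v.val < m)]
  have h1 : ∑ v ∈ Finset.univ.filter (fun v : Fin n => v.val < m),
      Nat.choose (ndeg (constructG n m k) v) r = m * Nat.choose (m - 1) r := by
    rw [Finset.sum_congr rfl (fun v hv =>
      by rw [ndeg_constructG_clique hmn (Finset.mem_filter.mp hv).2]),
      Finset.sum_const, card_filter_lt_fin n m hmn, smul_eq_mul]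
  have hcard2 : (Finset.univ.filter (fun v : Fin n => ¬ v.val < m)).card = n - m := by
    have := Finset.card_filter_add_card_filter_not (s := (Finset.univ : Finset (Fin n)))
      (p := fun v : Fin n => v.val < m)
    rw [card_filter_lt_fin n m hmn, Finset.card_univ, Fintype.card_fin] at this
    omega
  have h2 : ∑ v ∈ Finset.univ.filter (fun v : Fin n => ¬ v.val < m),
      Nat.choose (ndeg (constructG n m k) v) r = (n - m) * Nat.choose (2 * k) r := by
    rw [Finset.sum_congr rfl (fun v hv =>
      by rw [ndeg_constructG_circ hk2 (le_of_not_gt (Finset.mem_filter.mp hv).2)]),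
      Finset.sum_const, hcard2, smul_eq_mul]
  rw [h1, h2]

lemma lower_bound {n t r : ℕ} (ht3 : 3 ≤ t) (G : SimpleGraph (Fin n))
    (hsat : StarSaturated G t) (hn : t ≤ n) :
    ∃ m, m < t ∧ m ≤ n ∧
      m * Nat.choose (m - 1) r + (n - m) * Nat.choose (t - 1) r ≤ starCount G r := by
  classical
  have hdeg : ∀ v : Fin n, ndeg G v < t := by
    intro v
    by_contra hc
    exact hsat.1 ⟨v, le_of_not_gt hc⟩
  set A : Finset (Fin n) := Finset.univ.filter (fun v => ndeg G v ≤ t - 2) with hA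
  set m := A.card with hm
  have hmn : m ≤ n := by
    rw [hm]
    calc A.card ≤ Finset.univ.card := Finset.card_le_univ A
    _ = n := by rw [Finset.card_univ, Fintype.card_fin]
  have hclique : ∀ u ∈ A, ∀ v ∈ A, u ≠ v → G.Adj u v := by
    intro u hu v hv huv
    by_contra hadj
    obtain ⟨w, hw⟩ := hsat.2 u v huv hadj
    have hu' : ndeg G u ≤ t - 2 := (Finset.mem_filter.mp hu).2
    have hv' : ndeg G v ≤ t - 2 := (Finset.mem_filter.mp hv).2
    have h3 := ndeg_sup_edge_le G u v w
    by_cases h1 : w = u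
    · subst h1; omega
    by_cases h2 : w = v
    · subst h2; omega
    · rw [ndeg_sup_edge_other G h1 h2] at hw
      exact absurd hw (not_le.mpr (hdeg w))
  have hdegA : ∀ v ∈ A, m - 1 ≤ ndeg G v := by
    intro v hv
    have hsub : ((A.erase v : Finset (Fin n)) : Set (Fin n)) ⊆ G.neighborSet v := by
      intro u hu
      simp only [Finset.coe_erase, Set.mem_diff, Finset.mem_coe, Set.mem_singleton_iff] at hu
      exact hclique v hv u hu.1 (fun h => hu.2 h.symm)
    have := Set.ncard_le_ncard hsub (Set.toFinite _)
    rw [Set.ncard_coe_finset, Finset.card_erase_of_mem hv] at this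
    exact this
  have hmt : m < t := by
    rcases Nat.eq_zero_or_pos m with h0 | h0
    · omega
    · obtain ⟨v, hv⟩ := Finset.card_pos.mp h0
      have h1 := hdegA v hv
      have h2 : ndeg G v ≤ t - 2 := (Finset.mem_filter.mp hv).2
      omega
  have hdegnotA : ∀ v ∉ A, ndeg G v = t - 1 := by
    intro v hv
    have h1 : ¬ ndeg G v ≤ t - 2 := by
      intro hc
      exact hv (Finset.mem_filter.mpr ⟨Finset.mem_univ _, hc⟩)
    have := hdeg v
    omega
  refine ⟨m, hmt, hmn, ?_⟩
  rw [starCount, ← Finset.sum_filter_add_sum_filter_not Finset.univ (fun v => ndeg G v ≤ t - 2)]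
  have hle1 : m * Nat.choose (m - 1) r ≤ ∑ v ∈ A, Nat.choose (ndeg G v) r := by
    calc m * Nat.choose (m - 1) r = ∑ _v ∈ A, Nat.choose (m - 1) r := by
          rw [Finset.sum_const, smul_eq_mul]
    _ ≤ ∑ v ∈ A, Nat.choose (ndeg G v) r :=
          Finset.sum_le_sum (fun v hv => Nat.choose_le_choose r (hdegA v hv))
  have hcard2 : (Finset.univ.filter (fun v => ¬ ndeg G v ≤ t - 2)).card = n - m := by
    have := Finset.card_filter_add_card_filter_not (s := (Finset.univ : Finset (Fin n)))
      (p := fun v : Fin n => ndeg G v ≤ t - 2)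
    rw [Finset.card_univ, Fintype.card_fin, ← hA, ← hm] at this
    omega
  have hle2 : ∑ v ∈ Finset.univ.filter (fun v => ¬ ndeg G v ≤ t - 2), Nat.choose (ndeg G v) r
      = (n - m) * Nat.choose (t - 1) r := by
    rw [Finset.sum_congr rfl (fun v hv =>
      by rw [hdegnotA v (fun hc => (Finset.mem_filter.mp hv).2 (Finset.mem_filter.mp hc).2)]),
      Finset.sum_const, hcard2, smul_eq_mul]
  rw [hle2]
  exact Nat.add_le_add hle1 le_rfl

end StarSatAux

theorem stmt16 (t r n : ℕ) (ht : 3 ≤ t) (hodd : Odd t) (hr : 1 ≤ r) (hrt : r < t)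
    (hn : 2 * t - 1 ≤ n) :
    IsLeast {N : ℕ | ∃ G : SimpleGraph (Fin n), StarSaturated G t ∧ N = starCount G r}
      ((Finset.range t).inf' (Finset.nonempty_range_iff.mpr (by omega))
        (fun m => m * Nat.choose (m - 1) r + (n - m) * Nat.choose (t - 1) r)) := by
  obtain ⟨k, hk⟩ := hodd
  have hk1 : 1 ≤ k := by omega
  constructor
  · obtain ⟨m0, hm0mem, hm0eq⟩ := Finset.exists_mem_eq_inf'
      (Finset.nonempty_range_iff.mpr (show t ≠ 0 by omega))
      (fun m => m * Nat.choose (m - 1) r + (n - m) * Nat.choose (t - 1) r)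
    have hm0 : m0 < t := Finset.mem_range.mp hm0mem
    have hm0k : m0 ≤ 2 * k := by omega
    have hk2 : 2 * k < n - m0 := by omega
    refine ⟨StarSatAux.constructG n m0 k, StarSatAux.constructG_saturated hk hm0k hk2, ?_⟩
    refine hm0eq.trans ?_
    rw [StarSatAux.starCount_constructG r hk2]
    have h21 : t - 1 = 2 * k := by omega
    rw [h21]
  · rintro N ⟨G, hsat, rfl⟩
    obtain ⟨m, hmt, hmn, hle⟩ := StarSatAux.lower_bound ht G hsat (by omega)
    exact le_trans (Finset.inf'_le _ (Finset.mem_range.mpr hmt)) hle
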